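/- Fix α, β ∈ (0,1] and γ > 0. Consider the problem of maximizing P(|X−Y| ≤ γ) over pairs of independent real-valued random variables X, Y having Lebesgue densities f_X, f_Y satisfying f_X(x) ≤ α⁻¹ 1_{[0,1]}(x) and f_Y(y) ≤ β⁻¹ 1_{[0,1]}(y) for all x, y. Then an optimizer is given by X uniformly distributed on [(1−α)/2, (1+α)/2] and Y uniformly distributed on [(1−β)/2, (1+β)/2]. -/

import Mathlib

open MeasureTheory Set Filter Topology

noncomputable section

/-- The uniform distribution on `[a,b]`. -/
def unifIcc (a b : ℝ) : Measure ℝ :=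
  (ENNReal.ofReal (b - a))⁻¹ • volume.restrict (Icc a b)

namespace MaxProb

/-- sliding window integral -/
def W (γ : ℝ) (g : ℝ → ℝ) (x : ℝ) : ℝ := ∫ t in Set.Ioc (x - γ) (x + γ), g t

/-- feasible density with cap `c` on `[0,1]` -/
structure Feas (c : ℝ) (g : ℝ → ℝ) : Prop where
  meas : Measurable g
  nonneg : ∀ y, 0 ≤ g y
  cap : ∀ y, g y ≤ c * Set.indicator (Icc (0:ℝ) 1) (1 : ℝ → ℝ) y
  mass : ∫ y, g y = 1

variable {γ c : ℝ} {g : ℝ → ℝ}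

lemma Feas.le_cap (hg : Feas c g) (hc : 0 ≤ c) (y : ℝ) : g y ≤ c := by
  refine (hg.cap y).trans ?_
  by_cases h : y ∈ Icc (0:ℝ) 1 <;>
    simp [Set.indicator_of_mem, Set.indicator_of_notMem, h, hc]

lemma Feas.zero_outside (hg : Feas c g) {y : ℝ} (hy : y ∉ Icc (0:ℝ) 1) : g y = 0 := by
  have := hg.cap y
  rw [Set.indicator_of_notMem hy] at this
  have h0 := hg.nonneg y
  nlinarith

lemma Feas.integrable (hg : Feas c g) : Integrable g := by
  have hind : Integrable (fun y => c * Set.indicator (Icc (0:ℝ) 1) (1:ℝ→ℝ) y) := by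
    refine Integrable.const_mul ?_ c
    rw [integrable_indicator_iff measurableSet_Icc]
    exact integrableOn_const (by simp [Real.volume_Icc])
  refine hind.mono' hg.meas.aestronglyMeasurable ?_
  refine Eventually.of_forall (fun y => ?_)
  rw [Real.norm_eq_abs, abs_of_nonneg (hg.nonneg y)]
  exact hg.cap y

lemma W_nonneg (hg : Feas c g) (x : ℝ) : 0 ≤ W γ g x :=
  setIntegral_nonneg measurableSet_Ioc (fun y _ => hg.nonneg y)

lemma W_le_one (hg : Feas c g) (x : ℝ) : W γ g x ≤ 1 := by
  have := setIntegral_le_integral (s := Set.Ioc (x - γ) (x + γ)) hg.integrable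
    (Eventually.of_forall hg.nonneg)
  rw [hg.mass] at this
  exact this

lemma W_le_cap (hγ : 0 < γ) (hc : 0 ≤ c) (hg : Feas c g) (x : ℝ) :
    W γ g x ≤ c * (2 * γ) := by
  have h1 : W γ g x ≤ ∫ _ in Set.Ioc (x - γ) (x + γ), c := by
    refine setIntegral_mono_on hg.integrable.integrableOn ?_ measurableSet_Ioc
      (fun y _ => hg.le_cap hc y)
    simp [integrableOn_const, Real.volume_Ioc]
  refine h1.trans ?_
  rw [setIntegral_const, measureReal_def, Real.volume_Ioc, smul_eq_mul]
  rw [ENNReal.toReal_ofReal (by linarith)]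
  nlinarith

lemma W_interval (hγ : 0 < γ) (x : ℝ) : W γ g x = ∫ t in (x - γ)..(x + γ), g t :=
  (intervalIntegral.integral_of_le (by linarith)).symm

lemma intervalIntegral_bounds (hg : Feas c g) (hc : 0 ≤ c) {a b : ℝ} (hab : a ≤ b) :
    0 ≤ (∫ t in a..b, g t) ∧ (∫ t in a..b, g t) ≤ c * (b - a) := by
  constructor
  · exact intervalIntegral.integral_nonneg hab (fun u _ => hg.nonneg u)
  · calc (∫ t in a..b, g t) ≤ ∫ _ in a..b, c := by
          refine intervalIntegral.integral_mono_on hab hg.integrable.intervalIntegrable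
            intervalIntegrable_const (fun u _ => hg.le_cap hc u)
      _ = c * (b - a) := by simp [intervalIntegral.integral_const]; ring

lemma W_lipschitz (hγ : 0 < γ) (hc : 0 ≤ c) (hg : Feas c g) (x x' : ℝ) :
    |W γ g x - W γ g x'| ≤ c * |x - x'| := by
  have key : ∀ u u' : ℝ, u ≤ u' → |W γ g u' - W γ g u| ≤ c * (u' - u) := by
    intro u u' h
    have hii : ∀ a b : ℝ, IntervalIntegrable g volume a b :=
      fun a b => hg.integrable.intervalIntegrable
    have h1 : (∫ t in (u-γ)..(u+γ), g t) + (∫ t in (u+γ)..(u'+γ), g t)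
        = ∫ t in (u-γ)..(u'+γ), g t :=
      intervalIntegral.integral_add_adjacent_intervals (hii _ _) (hii _ _)
    have h2 : (∫ t in (u-γ)..(u'-γ), g t) + (∫ t in (u'-γ)..(u'+γ), g t)
        = ∫ t in (u-γ)..(u'+γ), g t :=
      intervalIntegral.integral_add_adjacent_intervals (hii _ _) (hii _ _)
    have e1 : W γ g u' - W γ g u
        = (∫ t in (u+γ)..(u'+γ), g t) - (∫ t in (u-γ)..(u'-γ), g t) := by
      rw [W_interval hγ, W_interval hγ]; linarith
    have b1 := intervalIntegral_bounds hg hc (by linarith : u + γ ≤ u' + γ)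
    have b2 := intervalIntegral_bounds hg hc (by linarith : u - γ ≤ u' - γ)
    rw [e1, abs_le]
    constructor <;> nlinarith [b1.1, b1.2, b2.1, b2.2]
  rcases le_total x x' with h | h
  · have h1 := key x x' h
    rw [abs_sub_comm] at h1
    calc |W γ g x - W γ g x'| ≤ c * (x' - x) := h1
      _ = c * |x - x'| := by rw [abs_of_nonpos (by linarith : x - x' ≤ 0)]; ring
  · have h1 := key x' x h
    calc |W γ g x - W γ g x'| ≤ c * (x - x') := h1
      _ = c * |x - x'| := by rw [abs_of_nonneg (by linarith : (0:ℝ) ≤ x - x')]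

lemma W_zero_outside (hγ : 0 < γ) (hg : Feas c g) {x : ℝ}
    (hx : x ∉ Icc (-γ) (1 + γ)) : W γ g x = 0 := by
  have : ∀ y ∈ Set.Ioc (x - γ) (x + γ), g y = 0 := by
    intro y hy
    refine hg.zero_outside (fun hy' => ?_)
    simp only [mem_Icc, not_and_or, not_le] at hx
    rcases hx with h | h
    · rcases hy with ⟨_, h2⟩; rcases hy' with ⟨h3, _⟩; linarith
    · rcases hy with ⟨h1, _⟩; rcases hy' with ⟨_, h4⟩; linarith
  calc W γ g x = ∫ y in Set.Ioc (x - γ) (x + γ), (0:ℝ) :=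
        setIntegral_congr_fun measurableSet_Ioc this
    _ = 0 := by simp

lemma W_continuous (hγ : 0 < γ) (hc : 0 ≤ c) (hg : Feas c g) : Continuous (W γ g) := by
  have : LipschitzWith (Real.toNNReal c) (W γ g) := by
    refine LipschitzWith.of_dist_le_mul (fun x y => ?_)
    rw [Real.dist_eq, Real.dist_eq, Real.coe_toNNReal c hc]
    exact W_lipschitz hγ hc hg x y
  exact this.continuous

lemma W_bdd_indicator (hγ : 0 < γ) (hg : Feas c g) (x : ℝ) :
    ‖W γ g x‖ ≤ Set.indicator (Icc (-γ) (1+γ)) (fun _ => (1:ℝ)) x := by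
  by_cases h : x ∈ Icc (-γ) (1+γ)
  · rw [Set.indicator_of_mem h, Real.norm_eq_abs, abs_of_nonneg (W_nonneg hg x)]
    exact W_le_one hg x
  · rw [Set.indicator_of_notMem h, Real.norm_eq_abs, W_zero_outside hγ hg h]
    simp

lemma W_integrable (hγ : 0 < γ) (hc : 0 ≤ c) (hg : Feas c g) : Integrable (W γ g) := by
  have hind : Integrable (fun x => Set.indicator (Icc (-γ) (1+γ)) (fun _ => (1:ℝ)) x) := by
    rw [integrable_indicator_iff measurableSet_Icc]
    exact integrableOn_const (by simp [Real.volume_Icc])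
  exact hind.mono' (W_continuous hγ hc hg).aestronglyMeasurable
    (Eventually.of_forall (W_bdd_indicator hγ hg))

lemma W_mass (hγ : 0 < γ) (hc : 0 ≤ c) (hg : Feas c g) :
    ∫ x, W γ g x = 2 * γ := by
  classical
  set f : ℝ → ℝ → ℝ := fun x y => Set.indicator (Set.Ioc (x - γ) (x + γ)) g y with hf
  have hS : MeasurableSet {p : ℝ × ℝ | p.1 - γ < p.2 ∧ p.2 ≤ p.1 + γ} := by
    exact (measurableSet_lt (measurable_fst.sub measurable_const) measurable_snd).inter
      (measurableSet_le measurable_snd (measurable_fst.add measurable_const))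
  have hFm : Measurable (Function.uncurry f) := by
    have : Function.uncurry f = Set.indicator {p : ℝ × ℝ | p.1 - γ < p.2 ∧ p.2 ≤ p.1 + γ}
        (fun p => g p.2) := by
      funext p
      simp only [Function.uncurry, hf]
      by_cases h : p.2 ∈ Set.Ioc (p.1 - γ) (p.1 + γ)
      · rw [Set.indicator_of_mem h, Set.indicator_of_mem
          (show p ∈ {p : ℝ × ℝ | p.1 - γ < p.2 ∧ p.2 ≤ p.1 + γ} from h)]
      · rw [Set.indicator_of_notMem h, Set.indicator_of_notMem
          (show p ∉ {p : ℝ × ℝ | p.1 - γ < p.2 ∧ p.2 ≤ p.1 + γ} from h)]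
    rw [this]
    exact (hg.meas.comp measurable_snd).indicator hS
  have hFi : Integrable (Function.uncurry f) ((volume : Measure ℝ).prod volume) := by
    have hbox : Integrable (fun p : ℝ × ℝ =>
        Set.indicator (Icc (-γ) (1+γ) ×ˢ Icc (0:ℝ) 1) (fun _ => c) p)
        ((volume : Measure ℝ).prod volume) := by
      rw [integrable_indicator_iff (measurableSet_Icc.prod measurableSet_Icc)]
      refine integrableOn_const ?_
      rw [Measure.prod_prod]
      simp [Real.volume_Icc]
    refine hbox.mono' hFm.aestronglyMeasurable (Eventually.of_forall (fun p => ?_))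
    by_cases h : p.2 ∈ Set.Ioc (p.1 - γ) (p.1 + γ)
    · simp only [Function.uncurry, hf]
      rw [Set.indicator_of_mem h, Real.norm_eq_abs, abs_of_nonneg (hg.nonneg _)]
      by_cases h2 : p.2 ∈ Icc (0:ℝ) 1
      · have hp : p ∈ Icc (-γ) (1+γ) ×ˢ Icc (0:ℝ) 1 := by
          refine ⟨?_, h2⟩
          rcases h with ⟨ha, hb⟩; rcases h2 with ⟨hc2, hd⟩
          exact ⟨by linarith, by linarith⟩
        rw [Set.indicator_of_mem hp]
        exact hg.le_cap hc _
      · rw [hg.zero_outside h2]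
        exact Set.indicator_apply_nonneg (fun _ => hc)
    · simp only [Function.uncurry, hf]
      rw [Set.indicator_of_notMem h, norm_zero]
      exact Set.indicator_apply_nonneg (fun _ => hc)
  have swap := integral_integral_swap hFi
  have hL : (∫ x, ∫ y, f x y) = ∫ x, W γ g x := by
    refine integral_congr_ae (Eventually.of_forall (fun x => ?_))
    rw [hf]
    exact integral_indicator measurableSet_Ioc
  have hR : (∫ y, ∫ x, f x y) = 2 * γ := by
    have inner : ∀ y : ℝ, (∫ x, f x y) = (2 * γ) * g y := by
      intro y
      have : (fun x => f x y) = Set.indicator (Set.Ico (y - γ) (y + γ)) (fun _ => g y) := by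
        funext x
        show Set.indicator (Set.Ioc (x - γ) (x + γ)) g y
            = Set.indicator (Set.Ico (y - γ) (y + γ)) (fun _ => g y) x
        by_cases h : y ∈ Set.Ioc (x - γ) (x + γ)
        · rw [Set.indicator_of_mem h, Set.indicator_of_mem]
          rcases h with ⟨h1, h2⟩; exact ⟨by linarith, by linarith⟩
        · rw [Set.indicator_of_notMem h, Set.indicator_of_notMem]
          intro hx
          rcases hx with ⟨h1, h2⟩
          exact h ⟨by linarith, by linarith⟩
      rw [this, integral_indicator_const _ measurableSet_Ico]
      rw [measureReal_def, Real.volume_Ico, smul_eq_mul]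
      rw [ENNReal.toReal_ofReal (by linarith)]
      ring_nf
    rw [integral_congr_ae (Eventually.of_forall inner)]
    rw [integral_const_mul, hg.mass]
    ring
  rw [← hL, swap, hR]


lemma int_linear (a b p q : ℝ) :
    ∫ t in a..b, (p + q * t) = p * (b - a) + q * (b ^ 2 - a ^ 2) / 2 := by
  have h1 : Continuous (fun t : ℝ => q * t) := by continuity
  rw [intervalIntegral.integral_add intervalIntegrable_const (h1.intervalIntegrable a b),
    intervalIntegral.integral_const, intervalIntegral.integral_const_mul, integral_id]
  simp only [smul_eq_mul]
  ring

set_option maxHeartbeats 1600000 in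
/-- Core tail-mass bound for a `K`-Lipschitz function with values in `[0,m]`,
compact support and total mass at most `M`. -/
lemma Lstar {K m s M c d : ℝ} {φ : ℝ → ℝ} (hK : 0 < K) (hm : 0 < m)
    (hs0 : 0 ≤ s) (hsm : s ≤ m) (hKM : m ^ 2 ≤ K * M)
    (hlip : ∀ x y, |φ x - φ y| ≤ K * |x - y|)
    (h0 : ∀ x, 0 ≤ φ x) (hcap : ∀ x, φ x ≤ m)
    (hsupp : ∀ x, x ∉ Icc c d → φ x = 0)
    (hint : Integrable φ) (hmass : ∫ x, φ x ≤ M) :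
    K * m * (∫ x, max (φ x - s) 0) ≤ (m - s) * (K * M - s * m) := by
  have hφc : Continuous φ := by
    have : LipschitzWith (Real.toNNReal K) φ := by
      refine LipschitzWith.of_dist_le_mul (fun x y => ?_)
      rw [Real.dist_eq, Real.dist_eq, Real.coe_toNNReal K hK.le]
      exact hlip x y
    exact this.continuous
  have hKne : K ≠ 0 := ne_of_gt hK
  have hM0 : 0 ≤ M := by nlinarith
  have hφint : (0:ℝ) ≤ ∫ x, φ x := integral_nonneg h0
  -- trivial case s = 0
  rcases eq_or_lt_of_le hs0 with hs | hs
  · have he : (fun x => max (φ x - s) 0) = φ := by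
      funext x; rw [← hs, sub_zero, max_eq_left (h0 x)]
    rw [he, ← hs]
    have h2 := mul_le_mul_of_nonneg_left hmass (by positivity : (0:ℝ) ≤ K * m)
    nlinarith
  -- now 0 < s
  have hmaxint : Integrable (fun x => max (φ x - s) 0) := by
    refine hint.mono' ?_ (Eventually.of_forall (fun x => ?_))
    · exact ((hφc.sub continuous_const).max continuous_const).aestronglyMeasurable
    · rw [Real.norm_eq_abs, abs_of_nonneg (le_max_right _ _)]
      rcases le_total (φ x - s) 0 with h | h
      · rw [max_eq_right h]; exact h0 x
      · rw [max_eq_left h]; linarith [h0 x]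
  set Φ := ∫ x, max (φ x - s) 0 with hΦdef
  have hΦ0 : 0 ≤ Φ := integral_nonneg (fun x => le_max_right _ _)
  -- the level-measure function
  set nu : ℝ → ℝ := fun t => (volume {x | t < φ x}).toReal with hnudef
  have hsets : ∀ t : ℝ, MeasurableSet {x | t < φ x} :=
    fun t => measurableSet_lt measurable_const hφc.measurable
  have hsub : ∀ t : ℝ, 0 < t → {x | t < φ x} ⊆ Icc c d := by
    intro t ht x hx
    by_contra h
    simp only [mem_setOf_eq] at hx
    rw [hsupp x h] at hx
    linarith
  have hIccfin : volume (Icc c d) ≠ ⊤ := by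
    rw [Real.volume_Icc]; exact ENNReal.ofReal_ne_top
  have hfin : ∀ t : ℝ, 0 < t → volume {x | t < φ x} ≠ ⊤ :=
    fun t ht => ((measure_mono (hsub t ht)).trans_lt (lt_top_iff_ne_top.2 hIccfin)).ne
  have hnum : Measurable nu := by
    have : Measurable (fun t => volume {x | t < φ x}) :=
      Antitone.measurable (fun t t' h => measure_mono (fun x hx => lt_of_le_of_lt h hx))
    exact this.ennreal_toReal
  have hnu0 : ∀ t, 0 ≤ nu t := fun t => ENNReal.toReal_nonneg
  set Λ := nu s with hΛdef
  have hΛ0 : 0 ≤ Λ := hnu0 s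
  -- growth claim
  have grow : ∀ σ σ' : ℝ, 0 < σ → σ < σ' → {x | σ' < φ x}.Nonempty →
      nu σ' + 2 * (σ' - σ) / K ≤ nu σ := by
    intro σ σ' hσ hlt hne
    set S' := {x | σ' < φ x} with hS'def
    have hS'sub : S' ⊆ Icc c d := hsub σ' (by linarith)
    have hbddA : BddAbove S' := BddAbove.mono hS'sub bddAbove_Icc
    have hbddB : BddBelow S' := BddBelow.mono hS'sub bddBelow_Icc
    set zp := sSup S' with hzpdef
    set zm := sInf S' with hzmdef
    have hzpv : σ' ≤ φ zp := by
      have h1 : zp ∈ closure S' := csSup_mem_closure hne hbddA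
      have h2 : closure S' ⊆ {x | σ' ≤ φ x} :=
        closure_minimal (fun x hx => show σ' ≤ φ x from le_of_lt hx)
          (isClosed_le continuous_const hφc)
      exact h2 h1
    have hzmv : σ' ≤ φ zm := by
      have h1 : zm ∈ closure S' := csInf_mem_closure hne hbddB
      have h2 : closure S' ⊆ {x | σ' ≤ φ x} :=
        closure_minimal (fun x hx => show σ' ≤ φ x from le_of_lt hx)
          (isClosed_le continuous_const hφc)
      exact h2 h1
    set δ := (σ' - σ) / K with hδdef
    have hδ0 : 0 < δ := div_pos (by linarith) hK
    have hKδ : K * δ = σ' - σ := by rw [hδdef]; field_simp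
    have hI1 : Ioo zp (zp + δ) ⊆ {x | σ < φ x} := by
      intro y hy
      rcases hy with ⟨h1, h2⟩
      have habs : |zp - y| = y - zp := by rw [abs_of_nonpos (by linarith)]; ring
      have h3 := (le_abs_self (φ zp - φ y)).trans (hlip zp y)
      rw [habs] at h3
      show σ < φ y
      nlinarith
    have hI2 : Ioo (zm - δ) zm ⊆ {x | σ < φ x} := by
      intro y hy
      rcases hy with ⟨h1, h2⟩
      have habs : |zm - y| = zm - y := by rw [abs_of_nonneg (by linarith)]
      have h3 := (le_abs_self (φ zm - φ y)).trans (hlip zm y)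
      rw [habs] at h3
      show σ < φ y
      nlinarith
    have hmono : S' ⊆ {x | σ < φ x} := fun x hx => lt_trans hlt hx
    have hzz : zm ≤ zp := csInf_le_csSup hne hbddB hbddA
    have hd1 : Disjoint S' (Ioo zp (zp + δ)) := by
      rw [Set.disjoint_left]
      intro x hx hx2
      exact absurd (le_csSup hbddA hx) (not_le.2 hx2.1)
    have hd2 : Disjoint (S' ∪ Ioo zp (zp + δ)) (Ioo (zm - δ) zm) := by
      rw [Set.disjoint_left]
      intro x hx hx2
      rcases hx with hx | hx
      · exact absurd (csInf_le hbddB hx) (not_le.2 hx2.2)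
      · rcases hx with ⟨h1, _⟩; rcases hx2 with ⟨_, h2⟩; linarith
    have v1 : volume (Ioo zp (zp + δ)) = ENNReal.ofReal δ := by
      rw [Real.volume_Ioo]; congr 1; ring
    have v2 : volume (Ioo (zm - δ) zm) = ENNReal.ofReal δ := by
      rw [Real.volume_Ioo]; congr 1; ring
    have hmeasU : volume (S' ∪ Ioo zp (zp + δ) ∪ Ioo (zm - δ) zm)
        = volume S' + ENNReal.ofReal δ + ENNReal.ofReal δ := by
      rw [measure_union hd2 measurableSet_Ioo, measure_union hd1 measurableSet_Ioo, v1, v2]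
    have hle : volume S' + ENNReal.ofReal δ + ENNReal.ofReal δ ≤ volume {x | σ < φ x} := by
      rw [← hmeasU]
      refine measure_mono ?_
      refine Set.union_subset (Set.union_subset hmono hI1) hI2
    have hfinσ := hfin σ hσ
    have h4 : (volume S' + ENNReal.ofReal δ + ENNReal.ofReal δ).toReal ≤ nu σ :=
      ENNReal.toReal_mono hfinσ hle
    rw [ENNReal.toReal_add (by
        exact ENNReal.add_ne_top.2 ⟨hfin σ' (by linarith), ENNReal.ofReal_ne_top⟩)
        ENNReal.ofReal_ne_top,
      ENNReal.toReal_add (hfin σ' (by linarith)) ENNReal.ofReal_ne_top,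
      ENNReal.toReal_ofReal hδ0.le] at h4
    have : nu σ' + 2 * (σ' - σ) / K = nu σ' + δ + δ := by
      rw [hδdef]; ring
    rw [this]
    exact h4
  -- layer cake for Φ
  have hΦlc : Φ = ∫ t in Ioi (0:ℝ), nu (s + t) := by
    rw [hΦdef, Integrable.integral_eq_integral_meas_lt hmaxint
      (Eventually.of_forall (fun x => le_max_right _ _))]
    refine setIntegral_congr_fun measurableSet_Ioi (fun t ht => ?_)
    have hseteq : {a : ℝ | t < max (φ a - s) 0} = {x | s + t < φ x} := by
      ext a
      simp only [mem_setOf_eq]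
      constructor
      · intro h
        rcases le_total (φ a - s) 0 with hc2 | hc2
        · rw [max_eq_right hc2] at h; exact absurd h (by simp at ht ⊢; linarith)
        · rw [max_eq_left hc2] at h; linarith
      · intro h
        have h2 : t < φ a - s := by linarith
        exact lt_of_lt_of_le h2 (le_max_left _ _)
    rw [hseteq]
    rfl
  -- layer cake for φ
  have hφlc : ∫ x, φ x = ∫ t in Ioi (0:ℝ), nu t := by
    rw [Integrable.integral_eq_integral_meas_lt hint (Eventually.of_forall h0)]
    rfl
  -- shift identity
  have hshift : ∫ t in Ioi (0:ℝ), nu (s + t) = ∫ t in Ioi s, nu t := by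
    have h1 : ∀ t : ℝ, Set.indicator (Ioi (0:ℝ)) (fun t => nu (s + t)) t
        = Set.indicator (Ioi s) nu (s + t) := by
      intro t
      by_cases h : 0 < t
      · rw [Set.indicator_of_mem (mem_Ioi.2 h),
          Set.indicator_of_mem (mem_Ioi.2 (by linarith))]
      · rw [Set.indicator_of_notMem (by simpa using h),
          Set.indicator_of_notMem (by simp at h ⊢; linarith)]
    rw [← integral_indicator measurableSet_Ioi, ← integral_indicator measurableSet_Ioi]
    calc (∫ t, Set.indicator (Ioi (0:ℝ)) (fun t => nu (s + t)) t)
        = ∫ t, Set.indicator (Ioi s) nu (s + t) := by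
          exact integral_congr_ae (Eventually.of_forall h1)
      _ = ∫ t, Set.indicator (Ioi s) nu t := integral_add_left_eq_self _ s
  -- integrability of nu on Ioi 0
  set B := (volume (Icc c d)).toReal with hBdef
  have hnub : ∀ t ∈ Ioi (0:ℝ), ‖nu t‖ ≤ Set.indicator (Ioc (0:ℝ) m) (fun _ => B) t := by
    intro t ht
    simp only [mem_Ioi] at ht
    rw [Real.norm_eq_abs, abs_of_nonneg (hnu0 t)]
    by_cases h : t ≤ m
    · rw [Set.indicator_of_mem (show t ∈ Ioc (0:ℝ) m from ⟨ht, h⟩)]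
      exact ENNReal.toReal_mono hIccfin (measure_mono (hsub t ht))
    · rw [Set.indicator_of_notMem (by simp [mem_Ioc]; intro; linarith)]
      have : {x | t < φ x} = ∅ := by
        ext x; simp only [mem_setOf_eq, mem_empty_iff_false, iff_false, not_lt]
        linarith [hcap x]
      rw [hnudef]; simp only [this]
      simp
  have hIcoint : IntegrableOn nu (Ioi (0:ℝ)) := by
    have hbint : IntegrableOn (Set.indicator (Ioc (0:ℝ) m) (fun _ => B)) (Ioi (0:ℝ)) := by
      refine Integrable.integrableOn ?_
      rw [integrable_indicator_iff measurableSet_Ioc]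
      exact integrableOn_const (by rw [Real.volume_Ioc]; exact ENNReal.ofReal_ne_top)
    exact hbint.mono' hnum.aestronglyMeasurable.restrict
      ((ae_restrict_iff' measurableSet_Ioi).2 (Eventually.of_forall hnub))
  -- splitting
  have hsplit : ∫ t in Ioi (0:ℝ), nu t
      = (∫ t in Ioc (0:ℝ) s, nu t) + ∫ t in Ioi s, nu t := by
    rw [← setIntegral_union (Set.Ioc_disjoint_Ioi le_rfl) measurableSet_Ioi
      (hIcoint.mono_set Ioc_subset_Ioi_self)
      (hIcoint.mono_set (Ioi_subset_Ioi hs.le))]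
    rw [Set.Ioc_union_Ioi_eq_Ioi hs.le]
  -- case: S_s empty
  by_cases hNE : {x | s < φ x}.Nonempty
  swap
  · have hzero : Φ = 0 := by
      rw [hΦdef]
      have : ∀ x, max (φ x - s) 0 = 0 := by
        intro x
        have : ¬ s < φ x := fun h => hNE ⟨x, h⟩
        rw [max_eq_right (by linarith)]
      simp only [this]
      exact integral_zero _ _
    have hx1 : 0 ≤ K * M - s * m := by nlinarith [mul_nonneg hm.le (sub_nonneg.2 hsm)]
    have hx2 : 0 ≤ (m - s) * (K * M - s * m) := mul_nonneg (by linarith) hx1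
    rw [hzero, mul_zero]
    linarith
  -- skirt bound
  have hlow : ∀ t ∈ Ioc (0:ℝ) s, Λ + 2 * (s - t) / K ≤ nu t := by
    intro t ht
    rcases eq_or_lt_of_le ht.2 with he | hlt2
    · rw [he]; simp [hΛdef]
    · have := grow t s ht.1 hlt2 hNE
      rw [hΛdef]; linarith
  have hskirt : s * Λ + s ^ 2 / K ≤ ∫ t in Ioc (0:ℝ) s, nu t := by
    have hclin : Continuous (fun t : ℝ => Λ + 2 * (s - t) / K) := by fun_prop
    have h1 : (∫ t in Ioc (0:ℝ) s, (Λ + 2 * (s - t) / K)) ≤ ∫ t in Ioc (0:ℝ) s, nu t :=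
      setIntegral_mono_on hclin.integrableOn_Ioc
        (hIcoint.mono_set Ioc_subset_Ioi_self) measurableSet_Ioc hlow
    have h2 : (∫ t in Ioc (0:ℝ) s, (Λ + 2 * (s - t) / K)) = s * Λ + s ^ 2 / K := by
      rw [← intervalIntegral.integral_of_le hs.le]
      have hcg : EqOn (fun t : ℝ => Λ + 2 * (s - t) / K)
          (fun t : ℝ => (Λ + 2 * s / K) + (-(2 / K)) * t) (uIcc 0 s) := by
        intro t _; simp only []; field_simp; ring
      rw [intervalIntegral.integral_congr hcg, int_linear]
      field_simp; ring
    linarith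
  -- the majorant ρ and its integral
  set ρ : ℝ → ℝ := Set.indicator (Ioo 0 (m - s)) (fun t => max (Λ - (2 / K) * t) 0)
    with hρdef
  have hρcont : Continuous (fun t : ℝ => max (Λ - (2 / K) * t) 0) :=
    (continuous_const.sub (continuous_const.mul continuous_id)).max continuous_const
  have hρint : Integrable ρ := by
    rw [hρdef, integrable_indicator_iff measurableSet_Ioo]
    exact hρcont.integrableOn_Icc.mono_set Ioo_subset_Icc_self
  have hpt : ∀ t ∈ Ioi (0:ℝ), nu (s + t) ≤ ρ t := by
    intro t ht
    simp only [mem_Ioi] at ht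
    by_cases h1 : t < m - s
    · rw [hρdef, Set.indicator_of_mem (show t ∈ Ioo (0:ℝ) (m - s) from ⟨ht, h1⟩)]
      by_cases h2 : {x | s + t < φ x}.Nonempty
      · have hg := grow s (s + t) hs (by linarith) h2
        have he : 2 * ((s + t) - s) / K = (2 / K) * t := by ring
        rw [he] at hg
        have : nu (s + t) ≤ Λ - (2 / K) * t := by rw [hΛdef]; linarith
        exact this.trans (le_max_left _ _)
      · have hemp : {x | s + t < φ x} = ∅ := not_nonempty_iff_eq_empty.1 h2
        have : nu (s + t) = 0 := by rw [hnudef]; simp only [hemp]; simp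
        rw [this]
        exact le_max_right _ _
    · have hnotin : t ∉ Ioo (0:ℝ) (m - s) := by
        simp only [mem_Ioo, not_and, not_lt]
        intro _; linarith
      rw [hρdef, Set.indicator_of_notMem hnotin]
      have hemp : {x | s + t < φ x} = ∅ := by
        ext x; simp only [mem_setOf_eq, mem_empty_iff_false, iff_false, not_lt]
        linarith [hcap x]
      have : nu (s + t) = 0 := by rw [hnudef]; simp only [hemp]; simp
      rw [this]
  have hΦle : Φ ≤ ∫ t in Ioi (0:ℝ), ρ t := by
    rw [hΦlc]
    refine integral_mono_of_nonneg (Eventually.of_forall (fun t => hnu0 _))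
      hρint.integrableOn ((ae_restrict_iff' measurableSet_Ioi).2 (Eventually.of_forall hpt))
  set T := min (m - s) (K * Λ / 2) with hTdef
  have hT0 : 0 ≤ T := le_min (by linarith) (by positivity)
  have hTa : T ≤ m - s := min_le_left _ _
  have hTb : T ≤ K * Λ / 2 := min_le_right _ _
  have hρval : (∫ t in Ioi (0:ℝ), ρ t) = Λ * T - T ^ 2 / K := by
    rw [hρdef, setIntegral_indicator measurableSet_Ioo,
      Set.inter_eq_self_of_subset_right Ioo_subset_Ioi_self,
      ← integral_Ioc_eq_integral_Ioo,
      ← intervalIntegral.integral_of_le (by linarith : (0:ℝ) ≤ m - s),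
      ← intervalIntegral.integral_add_adjacent_intervals
        (hρcont.intervalIntegrable 0 T) (hρcont.intervalIntegrable T (m - s))]
    have hpiece1 : (∫ t in (0:ℝ)..T, max (Λ - (2 / K) * t) 0) = Λ * T - T ^ 2 / K := by
      have hcg : EqOn (fun t : ℝ => max (Λ - (2 / K) * t) 0)
          (fun t : ℝ => Λ + (-(2 / K)) * t) (uIcc 0 T) := by
        intro t ht
        rw [uIcc_of_le hT0] at ht
        have hnn : 0 ≤ Λ - (2 / K) * t := by
          have h1 : t ≤ K * Λ / 2 := le_trans ht.2 hTb
          have h2 : (2 / K) * t ≤ (2 / K) * (K * Λ / 2) :=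
            mul_le_mul_of_nonneg_left h1 (by positivity)
          have h3 : (2 / K) * (K * Λ / 2) = Λ := by field_simp
          nlinarith
        show max (Λ - (2 / K) * t) 0 = Λ + (-(2 / K)) * t
        rw [max_eq_left hnn]; ring
      rw [intervalIntegral.integral_congr hcg, int_linear]
      field_simp; ring
    have hpiece2 : (∫ t in T..(m - s), max (Λ - (2 / K) * t) 0) = 0 := by
      rcases le_or_gt (K * Λ / 2) (m - s) with hc1 | hc1
      · have hTeq : T = K * Λ / 2 := min_eq_right hc1
        have hcg : EqOn (fun t : ℝ => max (Λ - (2 / K) * t) 0)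
            (fun _ : ℝ => (0:ℝ)) (uIcc T (m - s)) := by
          intro t ht
          rw [uIcc_of_le hTa] at ht
          have h1 : K * Λ / 2 ≤ t := hTeq ▸ ht.1
          have hnp : Λ - (2 / K) * t ≤ 0 := by
            have h2 : (2 / K) * (K * Λ / 2) ≤ (2 / K) * t :=
              mul_le_mul_of_nonneg_left h1 (by positivity)
            have h3 : (2 / K) * (K * Λ / 2) = Λ := by field_simp
            nlinarith
          show max (Λ - (2 / K) * t) 0 = 0
          rw [max_eq_right hnp]
        rw [intervalIntegral.integral_congr hcg]
        simp
      · have hTeq : T = m - s := min_eq_left (by linarith)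
        rw [hTeq, intervalIntegral.integral_same]
    rw [hpiece1, hpiece2]; ring
  have hA1 : Φ ≤ Λ * T - T ^ 2 / K := by rw [← hρval]; exact hΦle
  have hA2 : s * Λ + s ^ 2 / K + Φ ≤ M := by
    have h1 : (∫ t in Ioi s, nu t) = Φ := by rw [hΦlc, hshift]
    have h2 := hmass
    rw [hφlc, hsplit, h1] at h2
    linarith [hskirt]
  -- final algebra
  rcases le_or_gt (K * Λ / 2) (m - s) with hc1 | hc1
  · -- regime: T = K*Λ/2
    have hTeq : T = K * Λ / 2 := min_eq_right hc1
    rw [hTeq] at hA1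
    have h1 : Φ ≤ K * Λ ^ 2 / 4 := by
      have he : Λ * (K * Λ / 2) - (K * Λ / 2) ^ 2 / K = K * Λ ^ 2 / 4 := by
        field_simp; ring
      linarith [hA1, he.symm.le, he.le]
    have k1 : K * m * Φ ≤ K * m * (K * Λ ^ 2 / 4) :=
      mul_le_mul_of_nonneg_left h1 (by positivity)
    have k3 : (K * Λ / 2) ^ 2 ≤ (m - s) * (K * Λ / 2) := by
      nlinarith [mul_le_mul_of_nonneg_right hc1 (by positivity : (0:ℝ) ≤ K * Λ / 2)]
    have k5 : m * (K * Λ / 2) ≤ K * M - s * m := by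
      nlinarith [mul_le_mul_of_nonneg_left hc1 hm.le]
    have k6 : (m - s) * (m * (K * Λ / 2)) ≤ (m - s) * (K * M - s * m) :=
      mul_le_mul_of_nonneg_left k5 (by linarith)
    nlinarith [mul_le_mul_of_nonneg_left k3 hm.le]
  · -- regime: T = m - s
    have hTeq : T = m - s := min_eq_left (by linarith)
    rw [hTeq] at hA1
    have a1 : K * Φ ≤ K * Λ * (m - s) - (m - s) ^ 2 := by
      have := mul_le_mul_of_nonneg_left hA1 hK.le
      have he : K * (Λ * (m - s) - (m - s) ^ 2 / K) = K * Λ * (m - s) - (m - s) ^ 2 := by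
        field_simp
      linarith [he.le, he.symm.le]
    have a2 : s * K * Λ + s ^ 2 + K * Φ ≤ K * M := by
      have := mul_le_mul_of_nonneg_left hA2 hK.le
      have he : K * (s * Λ + s ^ 2 / K + Φ) = s * K * Λ + s ^ 2 + K * Φ := by
        field_simp
      linarith [he.le, he.symm.le]
    have h5 : (m - s) * (s * K * Λ + s ^ 2 + K * Φ) ≤ (m - s) * (K * M) :=
      mul_le_mul_of_nonneg_left a2 (by linarith)
    have h6 : s * (K * Φ) ≤ s * (K * Λ * (m - s) - (m - s) ^ 2) :=
      mul_le_mul_of_nonneg_left a1 hs0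
    nlinarith [h5, h6]


/-- uniform density on `[a,b]` -/
def unifD (a b : ℝ) : ℝ → ℝ := fun x => (b - a)⁻¹ * Set.indicator (Icc a b) (1 : ℝ → ℝ) x

lemma feas_unifD {c : ℝ} (hc : c ∈ Ioc (0:ℝ) 1) :
    Feas c⁻¹ (unifD ((1-c)/2) ((1+c)/2)) := by
  obtain ⟨hc0, hc1⟩ := hc
  have hd : (1+c)/2 - (1-c)/2 = c := by ring
  constructor
  · exact measurable_const.mul ((measurable_one (α := ℝ)).indicator measurableSet_Icc)
  · intro y
    unfold unifD
    have h1 : (0:ℝ) ≤ ((1+c)/2 - (1-c)/2)⁻¹ := by rw [hd]; positivity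
    exact mul_nonneg h1 (Set.indicator_apply_nonneg (fun _ => zero_le_one))
  · intro y
    unfold unifD
    rw [hd]
    by_cases h : y ∈ Icc ((1-c)/2) ((1+c)/2)
    · rw [Set.indicator_of_mem h]
      have h2 : y ∈ Icc (0:ℝ) 1 := by
        rcases h with ⟨h3, h4⟩
        constructor <;> [linarith; linarith]
      rw [Set.indicator_of_mem h2]
    · rw [Set.indicator_of_notMem h, mul_zero]
      have := Set.indicator_apply_nonneg
        (s := Icc (0:ℝ) 1) (f := (1 : ℝ → ℝ)) (a := y) (fun _ => zero_le_one)
      positivity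
  · unfold unifD
    rw [integral_const_mul, integral_indicator measurableSet_Icc]
    simp only [Pi.one_apply]
    rw [setIntegral_const, measureReal_def, smul_eq_mul, mul_one, Real.volume_Icc, hd,
      ENNReal.toReal_ofReal hc0.le]
    field_simp

lemma vol_Ioc_inter_Icc (c' d' a b : ℝ) :
    volume (Ioc c' d' ∩ Icc a b) = ENNReal.ofReal (min d' b - max c' a) := by
  apply le_antisymm
  · refine (measure_mono (show Ioc c' d' ∩ Icc a b ⊆ Icc (max c' a) (min d' b)
      from ?_)).trans_eq ?_
    · intro t ht
      rcases ht with ⟨⟨h1, h2⟩, h3, h4⟩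
      exact ⟨max_le h1.le h3, le_min h2 h4⟩
    · rw [Real.volume_Icc]
  · calc ENNReal.ofReal (min d' b - max c' a)
        = volume (Ioc (max c' a) (min d' b)) := (Real.volume_Ioc).symm
      _ ≤ volume (Ioc c' d' ∩ Icc a b) := by
          refine measure_mono (fun t ht => ?_)
          rcases ht with ⟨h1, h2⟩
          exact ⟨⟨lt_of_le_of_lt (le_max_left _ _) h1, h2.trans (min_le_left _ _)⟩,
            ⟨(le_max_right c' a).trans h1.le, h2.trans (min_le_right _ _)⟩⟩

lemma W_unifD {γ a b : ℝ} (hab : a < b) (hγ : 0 < γ) (x : ℝ) :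
    W γ (unifD a b) x = (b - a)⁻¹ * max (min (x + γ) b - max (x - γ) a) 0 := by
  unfold W unifD
  rw [integral_const_mul]
  congr 1
  rw [setIntegral_indicator measurableSet_Icc]
  have h1 : (∫ t in Ioc (x - γ) (x + γ) ∩ Icc a b, (1:ℝ→ℝ) t)
      = (volume (Ioc (x - γ) (x + γ) ∩ Icc a b)).toReal := by
    simp only [Pi.one_apply]
    rw [setIntegral_const, measureReal_def, smul_eq_mul, mul_one]
  rw [h1, vol_Ioc_inter_Icc, ENNReal.toReal_ofReal']

/-- monotonicity of the window-overlap on the right half -/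
lemma Emono {β γ : ℝ} (x x' : ℝ) (hx : 1/2 ≤ x) (hxx : x ≤ x') :
    min (x' + γ) ((1+β)/2) - max (x' - γ) ((1-β)/2)
      ≤ min (x + γ) ((1+β)/2) - max (x - γ) ((1-β)/2) := by
  simp only [min_def, max_def]
  split_ifs <;> linarith

/-- symmetry of the window-overlap about `1/2` -/
lemma Esym {β γ : ℝ} (x : ℝ) :
    min ((1 - x) + γ) ((1+β)/2) - max ((1 - x) - γ) ((1-β)/2)
      = min (x + γ) ((1+β)/2) - max (x - γ) ((1-β)/2) := by
  simp only [min_def, max_def]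
  split_ifs <;> linarith


set_option maxHeartbeats 3200000 in
/-- Main real-integral inequality. -/
theorem main_real {α β γ : ℝ} (hα : α ∈ Ioc (0:ℝ) 1) (hβ : β ∈ Ioc (0:ℝ) 1) (hγ : 0 < γ)
    {f g : ℝ → ℝ} (hf : Feas α⁻¹ f) (hg : Feas β⁻¹ g) :
    ∫ x, f x * W γ g x ≤
      ∫ x, unifD ((1-α)/2) ((1+α)/2) x * W γ (unifD ((1-β)/2) ((1+β)/2)) x := by
  obtain ⟨hα0, hα1⟩ := hα
  obtain ⟨hβ0, hβ1⟩ := hβ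
  have hβne : (β:ℝ) ≠ 0 := hβ0.ne'
  have hfu : Feas α⁻¹ (unifD ((1-α)/2) ((1+α)/2)) := feas_unifD ⟨hα0, hα1⟩
  have hfv : Feas β⁻¹ (unifD ((1-β)/2) ((1+β)/2)) := feas_unifD ⟨hβ0, hβ1⟩
  have hβi0 : (0:ℝ) ≤ β⁻¹ := by positivity
  have hαi0 : (0:ℝ) ≤ α⁻¹ := by positivity
  -- abbreviations
  set v : ℝ → ℝ := unifD ((1-β)/2) ((1+β)/2) with hvdef
  set Wv : ℝ → ℝ := W γ v with hWvdef
  set Wg : ℝ → ℝ := W γ g with hWgdef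
  set s₀ : ℝ := Wv ((1+α)/2) with hs₀def
  set m : ℝ := min 1 (β⁻¹ * (2*γ)) with hmdef
  have hm0 : 0 < m := lt_min one_pos (by positivity)
  have hWvf : ∀ x, Wv x
      = β⁻¹ * max (min (x + γ) ((1+β)/2) - max (x - γ) ((1-β)/2)) 0 := by
    intro x
    rw [hWvdef, hvdef, W_unifD (by linarith : (1-β)/2 < (1+β)/2) hγ]
    have hd : (1+β)/2 - (1-β)/2 = β := by ring
    rw [hd]
  have hcapv : ∀ x, Wv x ≤ m :=
    fun x => le_min (W_le_one hfv x) (W_le_cap hγ hβi0 hfv x)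
  have hcapg : ∀ x, Wg x ≤ m :=
    fun x => le_min (W_le_one hg x) (W_le_cap hγ hβi0 hg x)
  have hWv0 : ∀ x, 0 ≤ Wv x := W_nonneg hfv
  have hWg0 : ∀ x, 0 ≤ Wg x := W_nonneg hg
  have hs₀0 : 0 ≤ s₀ := hWv0 _
  have hs₀m : s₀ ≤ m := hcapv _
  have hWvcont : Continuous Wv := W_continuous hγ hβi0 hfv
  have hWgcont : Continuous Wg := W_continuous hγ hβi0 hg
  -- Lstar applied to Wg
  have hKM : m ^ 2 ≤ β⁻¹ * (2*γ) := by
    have h1 : m ≤ 1 := min_le_left _ _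
    have h2 : m ≤ β⁻¹ * (2*γ) := min_le_right _ _
    nlinarith
  have hLs := Lstar (K := β⁻¹) (m := m) (s := s₀) (M := 2*γ) (c := -γ) (d := 1+γ)
    (by positivity) hm0 hs₀0 hs₀m hKM
    (fun x y => W_lipschitz hγ hβi0 hg x y)
    hWg0 hcapg (fun x hx => W_zero_outside hγ hg hx)
    (W_integrable hγ hβi0 hg) (le_of_eq (W_mass hγ hβi0 hg))
  set Φg : ℝ := ∫ x, max (Wg x - s₀) 0 with hΦgdef
  set Φv : ℝ := ∫ x, max (Wv x - s₀) 0 with hΦvdef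
  -- integrability of the max-terms
  have hmaxg_int : Integrable (fun x => max (Wg x - s₀) 0) := by
    refine (W_integrable hγ hβi0 hg).mono'
      (((hWgcont.sub continuous_const).max continuous_const).aestronglyMeasurable)
      (Eventually.of_forall (fun x => ?_))
    rw [Real.norm_eq_abs, abs_of_nonneg (le_max_right _ _)]
    rcases le_total (Wg x - s₀) 0 with h | h
    · rw [max_eq_right h]; exact hWg0 x
    · rw [max_eq_left h]; linarith [hWg0 x]
  have hmaxv_int : Integrable (fun x => max (Wv x - s₀) 0) := by
    refine (W_integrable hγ hβi0 hfv).mono'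
      (((hWvcont.sub continuous_const).max continuous_const).aestronglyMeasurable)
      (Eventually.of_forall (fun x => ?_))
    rw [Real.norm_eq_abs, abs_of_nonneg (le_max_right _ _)]
    rcases le_total (Wv x - s₀) 0 with h | h
    · rw [max_eq_right h]; exact hWv0 x
    · rw [max_eq_left h]; linarith [hWv0 x]
  -- step C1: bathtub bound
  have hC1 : (∫ x, f x * Wg x) ≤ s₀ + α⁻¹ * Φg := by
    have hint1 : Integrable (fun x => f x * Wg x) := by
      refine Integrable.bdd_mul (c := α⁻¹) (W_integrable hγ hβi0 hg)
        hf.meas.aestronglyMeasurable (Eventually.of_forall (fun x => ?_))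
      rw [Real.norm_eq_abs, abs_of_nonneg (hf.nonneg x)]
      exact hf.le_cap hαi0 x
    have hint2 : Integrable (fun x =>
        s₀ * f x + α⁻¹ * Set.indicator (Icc (0:ℝ) 1) (1:ℝ→ℝ) x * max (Wg x - s₀) 0) := by
      refine ((hf.integrable.const_mul s₀)).add ?_
      refine Integrable.bdd_mul (c := α⁻¹) hmaxg_int
        ((measurable_const.mul ((measurable_one (α := ℝ)).indicator
          measurableSet_Icc)).aestronglyMeasurable)
        (Eventually.of_forall (fun x => ?_))
      rw [Real.norm_eq_abs]
      by_cases h : x ∈ Icc (0:ℝ) 1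
      · rw [Set.indicator_of_mem h]; simp [abs_of_nonneg hαi0]
      · rw [Set.indicator_of_notMem h]; simp [hαi0]
    have hptw : ∀ x, f x * Wg x
        ≤ s₀ * f x + α⁻¹ * Set.indicator (Icc (0:ℝ) 1) (1:ℝ→ℝ) x * max (Wg x - s₀) 0 := by
      intro x
      have h1 : Wg x ≤ s₀ + max (Wg x - s₀) 0 := by
        rcases le_total (Wg x - s₀) 0 with h | h
        · rw [max_eq_right h]; linarith
        · rw [max_eq_left h]; linarith
      have h2 := mul_le_mul_of_nonneg_left h1 (hf.nonneg x)
      have h3 := mul_le_mul_of_nonneg_right (hf.cap x) (le_max_right (Wg x - s₀) 0)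
      nlinarith [le_max_right (Wg x - s₀) 0, hf.nonneg x]
    have hmono := integral_mono hint1 hint2 hptw
    have heq : (∫ x, (s₀ * f x
        + α⁻¹ * Set.indicator (Icc (0:ℝ) 1) (1:ℝ→ℝ) x * max (Wg x - s₀) 0))
        = s₀ + α⁻¹ * ∫ x in Icc (0:ℝ) 1, max (Wg x - s₀) 0 := by
      rw [integral_add (hf.integrable.const_mul s₀) ?_]
      · congr 1
        · rw [integral_const_mul, hf.mass, mul_one]
        · have hpt2 : ∀ x, α⁻¹ * Set.indicator (Icc (0:ℝ) 1) (1:ℝ→ℝ) x * max (Wg x - s₀) 0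
              = α⁻¹ * Set.indicator (Icc (0:ℝ) 1) (fun y => max (Wg y - s₀) 0) x := by
            intro x
            by_cases h : x ∈ Icc (0:ℝ) 1
            · rw [Set.indicator_of_mem h, Set.indicator_of_mem h]; simp
            · rw [Set.indicator_of_notMem h, Set.indicator_of_notMem h]; simp
          rw [integral_congr_ae (Eventually.of_forall hpt2), integral_const_mul,
            integral_indicator measurableSet_Icc]
      · refine Integrable.bdd_mul (c := α⁻¹) hmaxg_int
          ((measurable_const.mul ((measurable_one (α := ℝ)).indicator
            measurableSet_Icc)).aestronglyMeasurable)
          (Eventually.of_forall (fun x => ?_))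
        rw [Real.norm_eq_abs]
        by_cases h : x ∈ Icc (0:ℝ) 1
        · rw [Set.indicator_of_mem h]; simp [abs_of_nonneg hαi0]
        · rw [Set.indicator_of_notMem h]; simp [hαi0]
    have hle2 : (∫ x in Icc (0:ℝ) 1, max (Wg x - s₀) 0) ≤ Φg := by
      rw [hΦgdef]
      exact setIntegral_le_integral hmaxg_int
        (Eventually.of_forall (fun x => le_max_right _ _))
    have := mul_le_mul_of_nonneg_left hle2 hαi0
    rw [heq] at hmono
    linarith
  -- step P1/P2: comparisons for Wv
  have hP1 : ∀ x ∈ Icc ((1-α)/2) ((1+α)/2), s₀ ≤ Wv x := by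
    intro x hx
    rcases hx with ⟨hx1, hx2⟩
    rw [hWvf x, hs₀def, hWvf ((1+α)/2)]
    refine mul_le_mul_of_nonneg_left (max_le_max ?_ le_rfl) hβi0
    rcases le_total (1/2 : ℝ) x with h | h
    · exact Emono x ((1+α)/2) h hx2
    · have h1 := Emono (β := β) (γ := γ) (1 - x) ((1+α)/2) (by linarith) (by linarith)
      rw [Esym] at h1
      exact h1
  have hP2 : ∀ x, x ∉ Icc ((1-α)/2) ((1+α)/2) → Wv x ≤ s₀ := by
    intro x hx
    rw [mem_Icc, not_and_or, not_le, not_le] at hx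
    rw [hWvf x, hs₀def, hWvf ((1+α)/2)]
    refine mul_le_mul_of_nonneg_left (max_le_max ?_ le_rfl) hβi0
    rcases hx with h | h
    · have h1 := Emono (β := β) (γ := γ) ((1+α)/2) (1 - x) (by linarith) (by linarith)
      rw [Esym] at h1
      exact h1
    · exact Emono ((1+α)/2) x (by linarith) h.le
  -- step C4: exact value for the uniform pair
  have hC4 : (∫ x, unifD ((1-α)/2) ((1+α)/2) x * Wv x) = s₀ + α⁻¹ * Φv := by
    have hId : (fun x => max (Wv x - s₀) 0)
        = Set.indicator (Icc ((1-α)/2) ((1+α)/2)) (fun x => Wv x - s₀) := by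
      funext x
      by_cases h : x ∈ Icc ((1-α)/2) ((1+α)/2)
      · rw [Set.indicator_of_mem h, max_eq_left (by linarith [hP1 x h])]
      · rw [Set.indicator_of_notMem h, max_eq_right (by linarith [hP2 x h])]
    have h1 : Φv = (∫ x in Icc ((1-α)/2) ((1+α)/2), Wv x) - s₀ * α := by
      calc Φv = ∫ x, Set.indicator (Icc ((1-α)/2) ((1+α)/2)) (fun x => Wv x - s₀) x := by
            rw [hΦvdef, hId]
        _ = ∫ x in Icc ((1-α)/2) ((1+α)/2), (Wv x - s₀) :=
            integral_indicator measurableSet_Icc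
        _ = (∫ x in Icc ((1-α)/2) ((1+α)/2), Wv x) - s₀ * α := by
            rw [integral_sub ((W_integrable hγ hβi0 hfv).integrableOn)
              (integrableOn_const (by rw [Real.volume_Icc]; exact ENNReal.ofReal_ne_top))]
            congr 1
            rw [setIntegral_const, measureReal_def, smul_eq_mul, Real.volume_Icc,
              ENNReal.toReal_ofReal (by linarith)]
            ring_nf
    have h2 : (∫ x, unifD ((1-α)/2) ((1+α)/2) x * Wv x)
        = α⁻¹ * ∫ x in Icc ((1-α)/2) ((1+α)/2), Wv x := by
      have hpt : ∀ x, unifD ((1-α)/2) ((1+α)/2) x * Wv x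
          = α⁻¹ * Set.indicator (Icc ((1-α)/2) ((1+α)/2)) (fun y => Wv y) x := by
        intro x
        unfold unifD
        have hd : (1+α)/2 - (1-α)/2 = α := by ring
        rw [hd]
        by_cases h : x ∈ Icc ((1-α)/2) ((1+α)/2)
        · rw [Set.indicator_of_mem h, Set.indicator_of_mem h]; simp
        · rw [Set.indicator_of_notMem h, Set.indicator_of_notMem h]; simp
      rw [integral_congr_ae (Eventually.of_forall hpt), integral_const_mul,
        integral_indicator measurableSet_Icc]
    rw [h2, h1]
    have hinv : α⁻¹ * α = 1 := inv_mul_cancel₀ hα0.ne'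
    nlinarith [hinv]
  -- step C3: lower bound for Φv
  have hsplitmax : ∀ x, max (Wv x - s₀) 0 = Wv x - min (Wv x) s₀ := by
    intro x
    rcases le_total (Wv x) s₀ with h | h
    · rw [min_eq_left h, max_eq_right (by linarith)]; ring
    · rw [min_eq_right h, max_eq_left (by linarith)]
  have hmin_int : Integrable (fun x => min (Wv x) s₀) := by
    refine (W_integrable hγ hβi0 hfv).mono'
      ((hWvcont.min continuous_const).aestronglyMeasurable)
      (Eventually.of_forall (fun x => ?_))
    rw [Real.norm_eq_abs, abs_of_nonneg (le_min (hWv0 x) hs₀0)]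
    exact min_le_left _ _
  have hΦveq : Φv = 2*γ - ∫ x, min (Wv x) s₀ := by
    rw [hΦvdef, integral_congr_ae (Eventually.of_forall hsplitmax),
      integral_sub (W_integrable hγ hβi0 hfv) hmin_int, W_mass hγ hβi0 hfv]
  -- the trapezoid ψ
  have hψle : ∀ x, min (Wv x) s₀
      ≤ min s₀ (max 0 (min (β⁻¹ * (x - ((1-β)/2 - γ))) (β⁻¹ * (((1+β)/2 + γ) - x)))) := by
    intro x
    refine le_min (min_le_right _ _) (le_trans (min_le_left _ _) ?_)
    rw [hWvf x]
    rcases le_total (min (x + γ) ((1+β)/2) - max (x - γ) ((1-β)/2)) 0 with h | h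
    · rw [max_eq_right h, mul_zero]
      exact le_max_left _ _
    · rw [max_eq_left h]
      refine le_trans ?_ (le_max_right _ _)
      refine le_min ?_ ?_
      · refine mul_le_mul_of_nonneg_left ?_ hβi0
        have := sub_le_sub (min_le_left (x+γ) ((1+β)/2)) (le_max_right (x-γ) ((1-β)/2))
        linarith
      · refine mul_le_mul_of_nonneg_left ?_ hβi0
        have := sub_le_sub (min_le_right (x+γ) ((1+β)/2)) (le_max_left (x-γ) ((1-β)/2))
        linarith
  have hβs₀1 : β * s₀ ≤ β := by nlinarith [hs₀m, min_le_left (1:ℝ) (β⁻¹*(2*γ))]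
  have hβs₀2 : β * s₀ ≤ 2*γ := by
    have h1 : s₀ ≤ β⁻¹ * (2*γ) := le_trans hs₀m (min_le_right _ _)
    have h2 : β * s₀ ≤ β * (β⁻¹ * (2*γ)) := mul_le_mul_of_nonneg_left h1 hβ0.le
    have h3 : β * (β⁻¹ * (2*γ)) = 2*γ := by field_simp
    linarith
  have hψval : (∫ x, min s₀ (max 0 (min (β⁻¹ * (x - ((1-β)/2 - γ)))
      (β⁻¹ * (((1+β)/2 + γ) - x))))) = s₀*(β+2*γ) - β*s₀^2 := by
    set c₁ : ℝ := (1-β)/2 - γ with hc₁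
    set c₄ : ℝ := (1+β)/2 + γ with hc₄
    have hc41 : c₄ - c₁ = β + 2*γ := by rw [hc₁, hc₄]; ring
    set c₂ : ℝ := c₁ + β * s₀ with hc₂
    set c₃ : ℝ := c₄ - β * s₀ with hc₃
    have hβs₀0 : 0 ≤ β * s₀ := mul_nonneg hβ0.le hs₀0
    have h12 : c₁ ≤ c₂ := by rw [hc₂]; linarith
    have h23 : c₂ ≤ c₃ := by rw [hc₂, hc₃]; linarith
    have h34 : c₃ ≤ c₄ := by rw [hc₃]; linarith
    have hψc : Continuous (fun x : ℝ => min s₀ (max 0 (min (β⁻¹ * (x - c₁)) (β⁻¹ * (c₄ - x))))) := by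
      refine continuous_const.min (continuous_const.max (Continuous.min ?_ ?_)) <;> fun_prop
    have hvanish : ∀ x, x ∉ Icc c₁ c₄ →
        min s₀ (max 0 (min (β⁻¹ * (x - c₁)) (β⁻¹ * (c₄ - x)))) = 0 := by
      intro x hx
      rw [mem_Icc, not_and_or, not_le, not_le] at hx
      have hneg : min (β⁻¹ * (x - c₁)) (β⁻¹ * (c₄ - x)) ≤ 0 := by
        rcases hx with h | h
        · exact le_trans (min_le_left _ _)
            (by nlinarith [mul_nonneg hβi0 (by linarith : (0:ℝ) ≤ c₁ - x)])
        · exact le_trans (min_le_right _ _)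
            (by nlinarith [mul_nonneg hβi0 (by linarith : (0:ℝ) ≤ x - c₄)])
      rw [max_eq_left hneg, min_eq_right hs₀0]
    rw [← setIntegral_eq_integral_of_forall_compl_eq_zero hvanish,
      integral_Icc_eq_integral_Ioc,
      ← intervalIntegral.integral_of_le (le_trans h12 (le_trans h23 h34)),
      ← intervalIntegral.integral_add_adjacent_intervals
        (a := c₁) (b := c₂) (c := c₄)
        ((hψc.intervalIntegrable _ _)) ((hψc.intervalIntegrable _ _)),
      ← intervalIntegral.integral_add_adjacent_intervals
        (a := c₂) (b := c₃) (c := c₄)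
        ((hψc.intervalIntegrable _ _)) ((hψc.intervalIntegrable _ _))]
    have hβinv_mul : β⁻¹ * (β * s₀) = s₀ := by field_simp
    have h2βs : 2 * (β * s₀) ≤ β + 2*γ := by linarith [hβs₀1, hβs₀2]
    have hp1 : (∫ x in c₁..c₂, min s₀ (max 0 (min (β⁻¹ * (x - c₁)) (β⁻¹ * (c₄ - x)))))
        = β * s₀^2 / 2 := by
      have hcg : EqOn (fun x : ℝ => min s₀ (max 0 (min (β⁻¹ * (x - c₁)) (β⁻¹ * (c₄ - x)))))
          (fun x : ℝ => (β⁻¹ * (-c₁)) + β⁻¹ * x) (uIcc c₁ c₂) := by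
        intro x hx
        rw [uIcc_of_le h12] at hx
        rcases hx with ⟨hxa, hxb⟩
        show min s₀ (max 0 (min (β⁻¹ * (x - c₁)) (β⁻¹ * (c₄ - x))))
            = (β⁻¹ * (-c₁)) + β⁻¹ * x
        have hA0 : 0 ≤ β⁻¹ * (x - c₁) := mul_nonneg hβi0 (by linarith)
        have hAs : β⁻¹ * (x - c₁) ≤ s₀ := by
          have h1 : x - c₁ ≤ β * s₀ := by rw [hc₂] at hxb; linarith
          have h2 := mul_le_mul_of_nonneg_left h1 hβi0
          linarith [hβinv_mul]
        have hAB : β⁻¹ * (x - c₁) ≤ β⁻¹ * (c₄ - x) := by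
          refine mul_le_mul_of_nonneg_left ?_ hβi0
          rw [hc₂] at hxb
          linarith [hc41]
        rw [min_eq_left hAB, max_eq_right hA0, min_eq_right hAs]
        ring
      rw [intervalIntegral.integral_congr hcg, int_linear, hc₂]
      field_simp
      ring
    have hp2 : (∫ x in c₂..c₃, min s₀ (max 0 (min (β⁻¹ * (x - c₁)) (β⁻¹ * (c₄ - x)))))
        = s₀ * (β + 2*γ) - 2 * (β * s₀^2) := by
      have hcg : EqOn (fun x : ℝ => min s₀ (max 0 (min (β⁻¹ * (x - c₁)) (β⁻¹ * (c₄ - x)))))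
          (fun _ : ℝ => s₀) (uIcc c₂ c₃) := by
        intro x hx
        rw [uIcc_of_le h23] at hx
        rcases hx with ⟨hxa, hxb⟩
        show min s₀ (max 0 (min (β⁻¹ * (x - c₁)) (β⁻¹ * (c₄ - x)))) = s₀
        have hA : s₀ ≤ β⁻¹ * (x - c₁) := by
          have h1 : β * s₀ ≤ x - c₁ := by rw [hc₂] at hxa; linarith
          have h2 := mul_le_mul_of_nonneg_left h1 hβi0
          linarith [hβinv_mul]
        have hB : s₀ ≤ β⁻¹ * (c₄ - x) := by
          have h1 : β * s₀ ≤ c₄ - x := by rw [hc₃] at hxb; linarith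
          have h2 := mul_le_mul_of_nonneg_left h1 hβi0
          linarith [hβinv_mul]
        have hmin : s₀ ≤ min (β⁻¹ * (x - c₁)) (β⁻¹ * (c₄ - x)) := le_min hA hB
        rw [max_eq_right (le_trans hs₀0 hmin), min_eq_left hmin]
      rw [intervalIntegral.integral_congr hcg, intervalIntegral.integral_const,
        smul_eq_mul]
      have h1 : c₃ - c₂ = β + 2*γ - 2*(β*s₀) := by rw [hc₃, hc₂]; linarith [hc41]
      rw [h1]
      ring
    have hp3 : (∫ x in c₃..c₄, min s₀ (max 0 (min (β⁻¹ * (x - c₁)) (β⁻¹ * (c₄ - x)))))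
        = β * s₀^2 / 2 := by
      have hcg : EqOn (fun x : ℝ => min s₀ (max 0 (min (β⁻¹ * (x - c₁)) (β⁻¹ * (c₄ - x)))))
          (fun x : ℝ => (β⁻¹ * c₄) + (-β⁻¹) * x) (uIcc c₃ c₄) := by
        intro x hx
        rw [uIcc_of_le h34] at hx
        rcases hx with ⟨hxa, hxb⟩
        show min s₀ (max 0 (min (β⁻¹ * (x - c₁)) (β⁻¹ * (c₄ - x))))
            = (β⁻¹ * c₄) + (-β⁻¹) * x
        have hB0 : 0 ≤ β⁻¹ * (c₄ - x) := mul_nonneg hβi0 (by linarith)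
        have hBs : β⁻¹ * (c₄ - x) ≤ s₀ := by
          have h1 : c₄ - x ≤ β * s₀ := by rw [hc₃] at hxa; linarith
          have h2 := mul_le_mul_of_nonneg_left h1 hβi0
          linarith [hβinv_mul]
        have hAB : β⁻¹ * (c₄ - x) ≤ β⁻¹ * (x - c₁) := by
          refine mul_le_mul_of_nonneg_left ?_ hβi0
          rw [hc₃] at hxa
          linarith [hc41]
        rw [min_eq_right hAB, max_eq_right hB0, min_eq_right hBs]
        ring
      rw [intervalIntegral.integral_congr hcg, int_linear, hc₃]
      field_simp
      ring
    rw [hp1, hp2, hp3]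
    ring
  have hψint : Integrable (fun x => min s₀ (max 0 (min (β⁻¹ * (x - ((1-β)/2 - γ)))
      (β⁻¹ * (((1+β)/2 + γ) - x))))) := by
    have hψc : Continuous (fun x : ℝ => min s₀ (max 0 (min (β⁻¹ * (x - ((1-β)/2 - γ)))
        (β⁻¹ * (((1+β)/2 + γ) - x))))) := by
      refine continuous_const.min (continuous_const.max (Continuous.min ?_ ?_)) <;> fun_prop
    have hbint : Integrable (Set.indicator (Icc ((1-β)/2 - γ) ((1+β)/2 + γ))
        (fun _ => s₀)) := by
      rw [integrable_indicator_iff measurableSet_Icc]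
      exact integrableOn_const (by rw [Real.volume_Icc]; exact ENNReal.ofReal_ne_top)
    refine hbint.mono' hψc.aestronglyMeasurable (Eventually.of_forall (fun x => ?_))
    by_cases h : x ∈ Icc ((1-β)/2 - γ) ((1+β)/2 + γ)
    · rw [Set.indicator_of_mem h, Real.norm_eq_abs, abs_of_nonneg
        (le_min hs₀0 (le_max_left _ _))]
      exact min_le_left _ _
    · rw [Set.indicator_of_notMem h, Real.norm_eq_abs]
      have hneg : min (β⁻¹ * (x - ((1-β)/2 - γ))) (β⁻¹ * (((1+β)/2 + γ) - x)) ≤ 0 := by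
        rw [mem_Icc, not_and_or, not_le, not_le] at h
        rcases h with h | h
        · exact le_trans (min_le_left _ _)
            (by nlinarith [mul_nonneg hβi0 (by linarith : (0:ℝ) ≤ ((1-β)/2 - γ) - x)])
        · exact le_trans (min_le_right _ _)
            (by nlinarith [mul_nonneg hβi0 (by linarith : (0:ℝ) ≤ x - ((1+β)/2 + γ))])
      rw [max_eq_left hneg, min_eq_right hs₀0]
      simp
  have hintψ : (∫ x, min (Wv x) s₀) ≤ s₀*(β+2*γ) - β*s₀^2 := by
    rw [← hψval]
    exact integral_mono hmin_int hψint hψle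
  have hC3 : 2*γ - (s₀*(β+2*γ) - β*s₀^2) ≤ Φv := by
    rw [hΦveq]; linarith
  -- final assembly
  have hmid : m * (β + 2*γ - β*m) = 2*γ := by
    rcases min_cases (1:ℝ) (β⁻¹ * (2*γ)) with ⟨h1, h2⟩ | ⟨h1, h2⟩
    · rw [hmdef, h1]; ring
    · rw [hmdef, h1]; field_simp; all_goals ring
  have hident : β⁻¹ * m * (2*γ - (s₀*(β+2*γ) - β*s₀^2))
      = (m - s₀) * (β⁻¹*(2*γ) - s₀*m) := by
    have h1 : β * (β⁻¹ * m * (2*γ - (s₀*(β+2*γ) - β*s₀^2)))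
        = m * (2*γ - (s₀*(β+2*γ) - β*s₀^2)) := by field_simp
    have h2 : β * ((m - s₀) * (β⁻¹*(2*γ) - s₀*m))
        = (m - s₀) * (2*γ - β*(s₀*m)) := by field_simp; all_goals ring
    have h3 : m * (2*γ - (s₀*(β+2*γ) - β*s₀^2))
        = (m - s₀) * (2*γ - β*(s₀*m)) := by linear_combination (-s₀) * hmid
    refine mul_left_cancel₀ hβne ?_
    rw [h1, h2, ← h3]
  have hΦgv : Φg ≤ Φv := by
    have hpos : (0:ℝ) < β⁻¹ * m := by positivity
    have h1 : β⁻¹ * m * Φg ≤ β⁻¹ * m * Φv := by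
      calc β⁻¹ * m * Φg ≤ (m - s₀) * (β⁻¹*(2*γ) - s₀*m) := hLs
        _ = β⁻¹ * m * (2*γ - (s₀*(β+2*γ) - β*s₀^2)) := hident.symm
        _ ≤ β⁻¹ * m * Φv := mul_le_mul_of_nonneg_left hC3 hpos.le
    exact le_of_mul_le_mul_left h1 hpos
  have hfin2 := mul_le_mul_of_nonneg_left hΦgv hαi0
  calc (∫ x, f x * Wg x) ≤ s₀ + α⁻¹ * Φg := hC1
    _ ≤ s₀ + α⁻¹ * Φv := by linarith
    _ = ∫ x, unifD ((1-α)/2) ((1+α)/2) x * Wv x := hC4.symm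


lemma strip_measurable (γ : ℝ) : MeasurableSet {p : ℝ × ℝ | |p.1 - p.2| ≤ γ} :=
  measurableSet_le ((continuous_fst.sub continuous_snd).abs.measurable) measurable_const

lemma withDensity_prod_strip {γ c₁ c₂ : ℝ} (hγ : 0 < γ) (hc₁ : 0 ≤ c₁) (hc₂ : 0 ≤ c₂)
    {f g : ℝ → ℝ} (hf : Feas c₁ f) (hg : Feas c₂ g) :
    ((volume.withDensity fun x => ENNReal.ofReal (f x)).prod
      (volume.withDensity fun y => ENNReal.ofReal (g y)))
      {p : ℝ × ℝ | |p.1 - p.2| ≤ γ}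
    = ENNReal.ofReal (∫ x, f x * W γ g x) := by
  rw [Measure.prod_apply (strip_measurable γ)]
  have hpre : ∀ x : ℝ, (Prod.mk x ⁻¹' {p : ℝ × ℝ | |p.1 - p.2| ≤ γ}) = Icc (x - γ) (x + γ) := by
    intro x
    ext y
    simp only [mem_preimage, mem_setOf_eq, mem_Icc, abs_le]
    constructor
    · intro ⟨h1, h2⟩; exact ⟨by linarith, by linarith⟩
    · intro ⟨h1, h2⟩; exact ⟨by linarith, by linarith⟩
  have hinner : ∀ x : ℝ, (volume.withDensity fun y => ENNReal.ofReal (g y))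
      (Prod.mk x ⁻¹' {p : ℝ × ℝ | |p.1 - p.2| ≤ γ}) = ENNReal.ofReal (W γ g x) := by
    intro x
    rw [hpre x, withDensity_apply _ measurableSet_Icc]
    rw [← ofReal_integral_eq_lintegral_ofReal hg.integrable.integrableOn
      ((ae_restrict_iff' measurableSet_Icc).2 (Eventually.of_forall (fun y _ => hg.nonneg y)))]
    rw [integral_Icc_eq_integral_Ioc]
    rfl
  rw [lintegral_congr hinner]
  rw [lintegral_withDensity_eq_lintegral_mul _ hf.meas.ennreal_ofReal
    ((W_continuous hγ hc₂ hg).measurable.ennreal_ofReal)]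
  have hpt : ∀ x : ℝ, ((fun x => ENNReal.ofReal (f x)) * fun x => ENNReal.ofReal (W γ g x)) x
      = ENNReal.ofReal (f x * W γ g x) := by
    intro x
    simp only [Pi.mul_apply]
    rw [← ENNReal.ofReal_mul (hf.nonneg x)]
  rw [lintegral_congr hpt]
  rw [← ofReal_integral_eq_lintegral_ofReal]
  · refine Integrable.bdd_mul (c := c₁) (W_integrable hγ hc₂ hg)
      hf.meas.aestronglyMeasurable (Eventually.of_forall (fun x => ?_))
    rw [Real.norm_eq_abs, abs_of_nonneg (hf.nonneg x)]
    exact hf.le_cap hc₁ x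
  · exact Eventually.of_forall (fun x => mul_nonneg (hf.nonneg x) (W_nonneg hg x))

lemma unifIcc_eq_withDensity {a b : ℝ} (hab : a < b) :
    (ENNReal.ofReal (b - a))⁻¹ • volume.restrict (Icc a b)
      = volume.withDensity (fun x => ENNReal.ofReal (unifD a b x)) := by
  have h1 : (fun x => ENNReal.ofReal (unifD a b x))
      = Set.indicator (Icc a b) (fun _ => ENNReal.ofReal (b - a)⁻¹) := by
    funext x
    unfold unifD
    by_cases h : x ∈ Icc a b
    · rw [Set.indicator_of_mem h, Set.indicator_of_mem h]
      simp
    · rw [Set.indicator_of_notMem h, Set.indicator_of_notMem h]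
      simp
  rw [h1, withDensity_indicator measurableSet_Icc, withDensity_const,
    ENNReal.ofReal_inv_of_pos (by linarith)]

end MaxProb

open MaxProb in
/-- (Lemma: among pairs of independent random variables with densities
bounded by `α⁻¹ 1_{[0,1]}` and `β⁻¹ 1_{[0,1]}` respectively, the probability
`P(|X - Y| ≤ γ)` is maximized by `X ∼ U((1-α)/2, (1+α)/2)` and `Y ∼ U((1-β)/2, (1+β)/2)`). -/
theorem max_prob_close_uniform
    (α β γ : ℝ) (hα : α ∈ Ioc (0:ℝ) 1) (hβ : β ∈ Ioc (0:ℝ) 1) (hγ : 0 < γ)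
    (fX fY : ℝ → ℝ) (hfXm : Measurable fX) (hfYm : Measurable fY)
    (hfX0 : ∀ x, 0 ≤ fX x) (hfY0 : ∀ y, 0 ≤ fY y)
    (hfXb : ∀ x, fX x ≤ α⁻¹ * Set.indicator (Icc (0:ℝ) 1) (1 : ℝ → ℝ) x)
    (hfYb : ∀ y, fY y ≤ β⁻¹ * Set.indicator (Icc (0:ℝ) 1) (1 : ℝ → ℝ) y)
    (hfX1 : ∫ x, fX x = 1) (hfY1 : ∫ y, fY y = 1) :
    ((volume.withDensity fun x => ENNReal.ofReal (fX x)).prod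
        (volume.withDensity fun y => ENNReal.ofReal (fY y)))
      {p : ℝ × ℝ | |p.1 - p.2| ≤ γ} ≤
    ((unifIcc ((1 - α) / 2) ((1 + α) / 2)).prod
        (unifIcc ((1 - β) / 2) ((1 + β) / 2)))
      {p : ℝ × ℝ | |p.1 - p.2| ≤ γ} := by
  have hα0 := hα.1
  have hβ0 := hβ.1
  have hfX : Feas α⁻¹ fX := ⟨hfXm, hfX0, hfXb, hfX1⟩
  have hfY : Feas β⁻¹ fY := ⟨hfYm, hfY0, hfYb, hfY1⟩
  have hu : Feas α⁻¹ (unifD ((1-α)/2) ((1+α)/2)) := feas_unifD hα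
  have hv : Feas β⁻¹ (unifD ((1-β)/2) ((1+β)/2)) := feas_unifD hβ
  have hαi : (0:ℝ) ≤ α⁻¹ := by positivity
  have hβi : (0:ℝ) ≤ β⁻¹ := by positivity
  have e1 : unifIcc ((1 - α) / 2) ((1 + α) / 2)
      = volume.withDensity (fun x => ENNReal.ofReal (unifD ((1-α)/2) ((1+α)/2) x)) := by
    rw [unifIcc]
    exact unifIcc_eq_withDensity (by linarith)
  have e2 : unifIcc ((1 - β) / 2) ((1 + β) / 2)
      = volume.withDensity (fun x => ENNReal.ofReal (unifD ((1-β)/2) ((1+β)/2) x)) := by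
    rw [unifIcc]
    exact unifIcc_eq_withDensity (by linarith)
  rw [e1, e2, withDensity_prod_strip hγ hαi hβi hfX hfY,
    withDensity_prod_strip hγ hαi hβi hu hv]
  exact ENNReal.ofReal_le_ofReal (main_real hα hβ hγ hfX hfY)
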